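/- Let Δ ≥ 3 be an integer, let F be a graph with maximum degree at most Δ, and let Γ ⊆ V(F) be a subset of size |Γ| ≤ Δ such that deg_F(v) ≤ Δ − 1 for every v ∈ Γ. If H is the F_Γ-path of length 10 with endpoints w and w', then m(H, x) ≤ Δ − 1/2, where x = (w, w'). -/

import Mathlib

/-- The rooted density `m(F, X)`. -/
noncomputable def rootedDensity {V : Type*} (F : SimpleGraph V) (X : Set V) : ℝ :=
  sSup {x : ℝ | ∃ F' : F.Subgraph, 0 < F'.edgeSet.ncard ∧
    (X ⊆ F'.verts ∨ X ∩ F'.verts = ∅) ∧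
    x = (F'.edgeSet.ncard : ℝ) / ((F'.verts.ncard : ℝ) - max 1 ((X ∩ F'.verts).ncard : ℝ))}

/-- The `F_Γ`-path of length `10`: six outside vertices `Sum.inl j` (`j : Fin 6`, the
vertex `Sum.inl j` being at position `2j` on the path) and five copies of `F` (the copy
`Sum.inr (i, ·)` lying between the outside vertices `i` and `i + 1`); each outside vertex
is joined to all vertices of `Γ` in each of its neighbouring copies of `F`. -/
def FGammaPath {V : Type*} (F : SimpleGraph V) (Γ : Set V) :
    SimpleGraph (Fin 6 ⊕ Fin 5 × V) :=
  SimpleGraph.fromRel fun a b =>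
    match a, b with
    | Sum.inr (i, u), Sum.inr (i', v) => i = i' ∧ F.Adj u v
    | Sum.inl j, Sum.inr (i, u) => u ∈ Γ ∧ ((j : ℕ) = (i : ℕ) ∨ (j : ℕ) = (i : ℕ) + 1)
    | _, _ => False

section Aux

lemma FGP.spanningCoe_edgeSet {W : Type*} {G : SimpleGraph W} (F' : G.Subgraph) :
    F'.spanningCoe.edgeSet = F'.edgeSet := by
  ext e; induction e using Sym2.ind with
  | _ u v => simp [SimpleGraph.mem_edgeSet, SimpleGraph.Subgraph.mem_edgeSet,
      SimpleGraph.Subgraph.spanningCoe_adj]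

lemma FGP.subgraph_handshake {W : Type*} [Fintype W] {G : SimpleGraph W} (F' : G.Subgraph) :
    ∑ w : W, (F'.neighborSet w).ncard = 2 * F'.edgeSet.ncard := by
  classical
  have h := SimpleGraph.sum_degrees_eq_twice_card_edges F'.spanningCoe
  have h2 : ∀ w, F'.spanningCoe.degree w = (F'.neighborSet w).ncard := by
    intro w
    rw [Set.ncard_eq_toFinset_card']
    rw [SimpleGraph.degree]
    congr 1
    ext y
    simp [SimpleGraph.mem_neighborFinset, SimpleGraph.Subgraph.spanningCoe_adj]
  have h3 : F'.spanningCoe.edgeFinset.card = F'.edgeSet.ncard := by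
    rw [Set.ncard_eq_toFinset_card', SimpleGraph.edgeFinset]
    congr 1
    simp [FGP.spanningCoe_edgeSet]
  rw [← h3, ← h]
  exact Finset.sum_congr rfl fun w _ => (h2 w).symm

lemma FGP.small_verts {W : Type*} {G : SimpleGraph W} (F' : G.Subgraph)
    (h : F'.verts.ncard = 2) : F'.edgeSet.ncard ≤ 1 := by
  obtain ⟨u, v, huv, hv⟩ := Set.ncard_eq_two.mp h
  have hsub : F'.edgeSet ⊆ {s(u, v)} := by
    intro e he
    induction e using Sym2.ind with
    | _ a b =>
      have hadj : F'.Adj a b := he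
      have ha : a ∈ F'.verts := F'.edge_vert hadj
      have hb : b ∈ F'.verts := F'.edge_vert hadj.symm
      have hne : a ≠ b := hadj.ne
      rw [hv] at ha hb
      simp only [Set.mem_insert_iff, Set.mem_singleton_iff] at ha hb
      rcases ha with rfl | rfl <;> rcases hb with rfl | rfl <;> simp_all [Sym2.eq_swap]
  calc F'.edgeSet.ncard ≤ ({s(u,v)} : Set (Sym2 W)).ncard :=
        Set.ncard_le_ncard hsub (Set.finite_singleton _)
    _ = 1 := Set.ncard_singleton _

lemma FGP.two_le_verts {W : Type*} {G : SimpleGraph W} (F' : G.Subgraph)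
    (h : 0 < F'.edgeSet.ncard) (hfin : F'.verts.Finite) : 2 ≤ F'.verts.ncard := by
  obtain ⟨e, he⟩ := Set.nonempty_of_ncard_ne_zero h.ne'
  induction e using Sym2.ind with
  | _ a b =>
    have hadj : F'.Adj a b := he
    have hsub : ({a, b} : Set W) ⊆ F'.verts := by
      rintro x (rfl | rfl)
      · exact F'.edge_vert hadj
      · exact F'.edge_vert hadj.symm
    calc 2 = ({a, b} : Set W).ncard := (Set.ncard_pair hadj.ne).symm
      _ ≤ F'.verts.ncard := Set.ncard_le_ncard hsub hfin

lemma FGP.adj_ll {V : Type*} (F : SimpleGraph V) (Γ : Set V) (j j' : Fin 6) :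
    ¬ (FGammaPath F Γ).Adj (Sum.inl j) (Sum.inl j') := by
  simp [FGammaPath, SimpleGraph.fromRel_adj]

lemma FGP.adj_lr {V : Type*} (F : SimpleGraph V) (Γ : Set V) (j : Fin 6) (i : Fin 5) (u : V) :
    (FGammaPath F Γ).Adj (Sum.inl j) (Sum.inr (i, u)) ↔
      u ∈ Γ ∧ ((j : ℕ) = (i : ℕ) ∨ (j : ℕ) = (i : ℕ) + 1) := by
  simp [FGammaPath, SimpleGraph.fromRel_adj]

lemma FGP.adj_rr {V : Type*} (F : SimpleGraph V) (Γ : Set V) (i i' : Fin 5) (u v : V) :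
    (FGammaPath F Γ).Adj (Sum.inr (i, u)) (Sum.inr (i', v)) ↔ i = i' ∧ F.Adj u v := by
  constructor
  · rintro ⟨hne, h | h⟩
    · exact h
    · exact ⟨h.1.symm, h.2.symm⟩
  · rintro ⟨rfl, h⟩
    exact ⟨by simp [h.ne], Or.inl ⟨rfl, h⟩⟩

lemma FGP.copyB (D gr hr br br' : ℝ) (h3 : 3 ≤ D) (hg0 : 0 ≤ gr) (hh0 : 0 ≤ hr) (hgD : gr ≤ D)
    (hb : br = 0 ∨ br = 1) (hb' : br' = 0 ∨ br' = 1) :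
    br * gr + br' * gr + (gr * ((D - 1) + (br + br')) + hr * D) ≤
      (2*D - 1) * (gr + hr) + D * (br * br') := by
  rcases hb with rfl | rfl <;> rcases hb' with rfl | rfl <;>
    nlinarith [mul_nonneg hg0 (by linarith : (0:ℝ) ≤ D - 3),
      mul_nonneg hh0 (by linarith : (0:ℝ) ≤ D - 1)]

lemma FGP.struct2 (b0 b1 b2 b3 b4 b5 : ℕ) (h0 : b0 = 1) (h5 : b5 = 1)
    (i1 : b1 ≤ 1) (i2 : b2 ≤ 1) (i3 : b3 ≤ 1) (i4 : b4 ≤ 1) :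
    3 * (b0*b1 + b1*b2 + b2*b3 + b3*b4 + b4*b5) + 10 ≤ 5 * (b0 + b1 + b2 + b3 + b4 + b5) := by
  subst h0 h5
  interval_cases b1 <;> interval_cases b2 <;> interval_cases b3 <;> interval_cases b4 <;> simp_all

lemma FGP.struct1 (b0 b1 b2 b3 b4 b5 : ℕ) (h0 : b0 = 0) (h5 : b5 = 0)
    (i1 : b1 ≤ 1) (i2 : b2 ≤ 1) (i3 : b3 ≤ 1) (i4 : b4 ≤ 1)
    (hnz : 1 ≤ b1 + b2 + b3 + b4) :
    3 * (b0*b1 + b1*b2 + b2*b3 + b3*b4 + b4*b5) + 5 ≤ 5 * (b0 + b1 + b2 + b3 + b4 + b5) := by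
  subst h0 h5
  interval_cases b1 <;> interval_cases b2 <;> interval_cases b3 <;> interval_cases b4 <;> simp_all

end Aux

set_option maxHeartbeats 1600000 in
/-- **Lemma 5.9.** Let `Δ ≥ 3`, let `F` be a graph with maximum degree at most `Δ` and
let `Γ ⊆ V(F)` with `|Γ| ≤ Δ` and `deg_F(v) ≤ Δ − 1` for all `v ∈ Γ`. If `H` is the
`F_Γ`-path of length `10` with endpoints `w, w'`, then `m(H, (w, w')) ≤ Δ − 1/2`. -/
theorem rootedDensity_FGammaPath_le {V : Type*} [Fintype V] (Δ : ℕ) (hΔ : 3 ≤ Δ)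
    (F : SimpleGraph V) (hF : ∀ v, {u | F.Adj v u}.ncard ≤ Δ)
    (Γ : Set V) (hΓ : Γ.ncard ≤ Δ) (hΓdeg : ∀ v ∈ Γ, {u | F.Adj v u}.ncard ≤ Δ - 1) :
    rootedDensity (FGammaPath F Γ)
        {Sum.inl (0 : Fin 6), Sum.inl (5 : Fin 6)} ≤ (Δ : ℝ) - 1 / 2 := by
  classical
  have hΔ1 : 1 ≤ Δ := le_trans (by norm_num) hΔ
  have hΔR : (3:ℝ) ≤ (Δ:ℝ) := by exact_mod_cast hΔ
  apply Real.sSup_le _ (by linarith)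
  rintro x ⟨F', hE, hX, rfl⟩
  obtain ⟨b, hb_def⟩ : ∃ b : Fin 6 → ℕ,
      b = fun j => if Sum.inl j ∈ F'.verts then 1 else 0 := ⟨_, rfl⟩
  obtain ⟨g, hg_def⟩ : ∃ g : Fin 5 → ℕ, g = fun i =>
      (Finset.univ.filter (fun x : V => Sum.inr (i, x) ∈ F'.verts ∧ x ∈ Γ)).card := ⟨_, rfl⟩
  obtain ⟨h, hh_def⟩ : ∃ h : Fin 5 → ℕ, h = fun i =>
      (Finset.univ.filter (fun x : V => Sum.inr (i, x) ∈ F'.verts ∧ x ∉ Γ)).card := ⟨_, rfl⟩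
  have hb1 : ∀ j, b j ≤ 1 := fun j => by
    simp only [hb_def]; split <;> norm_num
  have hbmem : ∀ j, Sum.inl j ∈ F'.verts → b j = 1 := fun j hj => by
    simp only [hb_def]; rw [if_pos hj]
  have hbnot : ∀ j, Sum.inl j ∉ F'.verts → b j = 0 := fun j hj => by
    simp only [hb_def]; rw [if_neg hj]
  have hgΔ : ∀ i, g i ≤ Δ := by
    intro i
    simp only [hg_def]
    have hsub : (Finset.univ.filter (fun x : V => Sum.inr (i, x) ∈ F'.verts ∧ x ∈ Γ)) ⊆
        (Finset.univ.filter (fun x : V => x ∈ Γ)) :=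
      Finset.monotone_filter_right _ (fun x _ hx => hx.2)
    calc (Finset.univ.filter (fun x : V => Sum.inr (i, x) ∈ F'.verts ∧ x ∈ Γ)).card
        ≤ (Finset.univ.filter (fun x : V => x ∈ Γ)).card := Finset.card_le_card hsub
      _ = Γ.ncard := by
          rw [Set.ncard_eq_toFinset_card']
          congr 1
          ext y; simp
      _ ≤ Δ := hΓ
  have hdegF : ∀ x : V, (Finset.univ.filter (fun y : V => F.Adj x y)).card
      = {u | F.Adj x u}.ncard := by
    intro x
    rw [Set.ncard_eq_toFinset_card']
    congr 1
    ext y; simp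
  have hnempty : ∀ w : Fin 6 ⊕ Fin 5 × V, w ∉ F'.verts → (F'.neighborSet w).ncard = 0 := by
    intro w hw
    have : F'.neighborSet w = ∅ :=
      Set.eq_empty_iff_forall_notMem.mpr (fun u hu => hw (F'.edge_vert hu))
    rw [this, Set.ncard_empty]
  -- degree bound for outside vertices
  have HOj : ∀ j : Fin 6, (F'.neighborSet (Sum.inl j)).ncard ≤
      ∑ i : Fin 5, (if (j:ℕ) = (i:ℕ) ∨ (j:ℕ) = (i:ℕ) + 1 then b j * g i else 0) := by
    intro j
    by_cases hj : Sum.inl j ∈ F'.verts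
    · have hbj : b j = 1 := hbmem j hj
      rw [Set.ncard_eq_toFinset_card']
      have hsub : (F'.neighborSet (Sum.inl j)).toFinset ⊆
          Finset.univ.biUnion (fun i : Fin 5 =>
            if (j:ℕ) = (i:ℕ) ∨ (j:ℕ) = (i:ℕ) + 1 then
              (Finset.univ.filter (fun x : V => Sum.inr (i, x) ∈ F'.verts ∧ x ∈ Γ)).image
                (fun x => (Sum.inr (i, x) : Fin 6 ⊕ Fin 5 × V)) else ∅) := by
        intro w hw
        rw [Set.mem_toFinset] at hw
        have hadj : F'.Adj (Sum.inl j) w := hw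
        have hmem : w ∈ F'.verts := F'.edge_vert hadj.symm
        have hH : (FGammaPath F Γ).Adj (Sum.inl j) w := F'.adj_sub hadj
        match w with
        | Sum.inl j' => exact absurd hH (FGP.adj_ll F Γ j j')
        | Sum.inr (i, y) =>
          rw [FGP.adj_lr] at hH
          simp only [Finset.mem_biUnion]
          refine ⟨i, Finset.mem_univ _, ?_⟩
          rw [if_pos hH.2]
          simp only [Finset.mem_image, Finset.mem_filter, Finset.mem_univ, true_and]
          exact ⟨y, ⟨hmem, hH.1⟩, rfl⟩
      calc (F'.neighborSet (Sum.inl j)).toFinset.card ≤ _ := Finset.card_le_card hsub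
        _ ≤ ∑ i : Fin 5, (if (j:ℕ) = (i:ℕ) ∨ (j:ℕ) = (i:ℕ) + 1 then
              (Finset.univ.filter (fun x : V => Sum.inr (i, x) ∈ F'.verts ∧ x ∈ Γ)).image
                (fun x => (Sum.inr (i, x) : Fin 6 ⊕ Fin 5 × V)) else ∅).card :=
            Finset.card_biUnion_le
        _ ≤ ∑ i : Fin 5, (if (j:ℕ) = (i:ℕ) ∨ (j:ℕ) = (i:ℕ) + 1 then b j * g i else 0) := by
            refine Finset.sum_le_sum fun i _ => ?_
            split_ifs
            · rw [hbj, one_mul]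
              simp only [hg_def]
              exact Finset.card_image_le
            · simp
    · rw [hnempty _ hj]
      exact Nat.zero_le _
  have HOsum : ∑ j : Fin 6, (F'.neighborSet (Sum.inl j)).ncard ≤
      ∑ i : Fin 5, (b i.castSucc * g i + b i.succ * g i) := by
    calc ∑ j : Fin 6, (F'.neighborSet (Sum.inl j)).ncard
        ≤ ∑ j : Fin 6, ∑ i : Fin 5,
            (if (j:ℕ) = (i:ℕ) ∨ (j:ℕ) = (i:ℕ) + 1 then b j * g i else 0) :=
          Finset.sum_le_sum fun j _ => HOj j
      _ = ∑ i : Fin 5, ∑ j : Fin 6,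
            (if (j:ℕ) = (i:ℕ) ∨ (j:ℕ) = (i:ℕ) + 1 then b j * g i else 0) := Finset.sum_comm
      _ = ∑ i : Fin 5, (b i.castSucc * g i + b i.succ * g i) := by
          refine Finset.sum_congr rfl fun i _ => ?_
          have hiff : ∀ j : Fin 6, ((j:ℕ) = (i:ℕ) ∨ (j:ℕ) = (i:ℕ) + 1) ↔
              j ∈ ({i.castSucc, i.succ} : Finset (Fin 6)) := by
            intro j
            simp [Fin.ext_iff, Fin.coe_castSucc, Fin.val_succ]
          calc ∑ j : Fin 6, (if (j:ℕ) = (i:ℕ) ∨ (j:ℕ) = (i:ℕ) + 1 then b j * g i else 0)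
              = ∑ j : Fin 6, (if j ∈ ({i.castSucc, i.succ} : Finset (Fin 6))
                  then b j * g i else 0) :=
                Finset.sum_congr rfl fun j _ => if_congr (hiff j) rfl rfl
            _ = ∑ j ∈ Finset.univ ∩ ({i.castSucc, i.succ} : Finset (Fin 6)), b j * g i :=
                Finset.sum_ite_mem _ _ _
            _ = b i.castSucc * g i + b i.succ * g i := by
                rw [Finset.univ_inter, Finset.sum_pair (Fin.castSucc_lt_succ : i.castSucc < i.succ).ne]
  -- degree bound for inside vertices
  have HI : ∀ i : Fin 5, ∑ x : V, (F'.neighborSet (Sum.inr (i, x))).ncard ≤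
      g i * ((Δ - 1) + (b i.castSucc + b i.succ)) + h i * Δ := by
    intro i
    have hcap : ∀ x : V, (F'.neighborSet (Sum.inr (i, x))).ncard ≤
        (if Sum.inr (i, x) ∈ F'.verts ∧ x ∈ Γ then (Δ - 1) + (b i.castSucc + b i.succ) else 0)
        + (if Sum.inr (i, x) ∈ F'.verts ∧ x ∉ Γ then Δ else 0) := by
      intro x
      by_cases hx : Sum.inr (i, x) ∈ F'.verts
      · have hsub : (F'.neighborSet (Sum.inr (i, x))).toFinset ⊆
            ((Finset.univ.filter (fun y : V => F.Adj x y)).image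
              (fun y => (Sum.inr (i, y) : Fin 6 ⊕ Fin 5 × V)))
            ∪ (((if Sum.inl i.castSucc ∈ F'.verts ∧ x ∈ Γ
                  then {(Sum.inl i.castSucc : Fin 6 ⊕ Fin 5 × V)} else ∅) : Finset _)
            ∪ ((if Sum.inl i.succ ∈ F'.verts ∧ x ∈ Γ
                  then {(Sum.inl i.succ : Fin 6 ⊕ Fin 5 × V)} else ∅) : Finset _)) := by
          intro w hw
          rw [Set.mem_toFinset] at hw
          have hadj : F'.Adj (Sum.inr (i, x)) w := hw
          have hmem : w ∈ F'.verts := F'.edge_vert hadj.symm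
          have hH : (FGammaPath F Γ).Adj (Sum.inr (i, x)) w := F'.adj_sub hadj
          match w with
          | Sum.inl j =>
            have hH' := hH.symm
            rw [FGP.adj_lr] at hH'
            obtain ⟨hxΓ, hj | hj⟩ := hH'
            · have hje : j = i.castSucc := by
                apply Fin.ext; simpa using hj
              subst hje
              apply Finset.mem_union_right
              apply Finset.mem_union_left
              rw [if_pos ⟨hmem, hxΓ⟩]
              exact Finset.mem_singleton_self _
            · have hje : j = i.succ := by
                apply Fin.ext; simpa using hj
              subst hje
              apply Finset.mem_union_right
              apply Finset.mem_union_right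
              rw [if_pos ⟨hmem, hxΓ⟩]
              exact Finset.mem_singleton_self _
          | Sum.inr (i', y) =>
            rw [FGP.adj_rr] at hH
            obtain ⟨rfl, hFxy⟩ := hH
            apply Finset.mem_union_left
            simp only [Finset.mem_image, Finset.mem_filter, Finset.mem_univ, true_and]
            exact ⟨y, hFxy, rfl⟩
        have hc1 : ((Finset.univ.filter (fun y : V => F.Adj x y)).image
              (fun y => (Sum.inr (i, y) : Fin 6 ⊕ Fin 5 × V))).card
            = (Finset.univ.filter (fun y : V => F.Adj x y)).card :=
          Finset.card_image_of_injective _ (fun a a' ha => by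
            simpa using ha)
        have hcard := (Set.ncard_eq_toFinset_card' _).trans_le
          ((Finset.card_le_card hsub).trans
            ((Finset.card_union_le _ _).trans (by
              exact Nat.add_le_add le_rfl (Finset.card_union_le _ _))))
        by_cases hxΓ : x ∈ Γ
        · have e1 : ((if Sum.inl i.castSucc ∈ F'.verts ∧ x ∈ Γ
              then {(Sum.inl i.castSucc : Fin 6 ⊕ Fin 5 × V)} else ∅) : Finset _).card
              ≤ b i.castSucc := by
            split_ifs with hc
            · rw [hbmem _ hc.1]; simp
            · simp
          have e2 : ((if Sum.inl i.succ ∈ F'.verts ∧ x ∈ Γ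
              then {(Sum.inl i.succ : Fin 6 ⊕ Fin 5 × V)} else ∅) : Finset _).card
              ≤ b i.succ := by
            split_ifs with hc
            · rw [hbmem _ hc.1]; simp
            · simp
          have e3 : (Finset.univ.filter (fun y : V => F.Adj x y)).card ≤ Δ - 1 := by
            rw [hdegF]; exact hΓdeg x hxΓ
          rw [if_pos ⟨hx, hxΓ⟩, if_neg (fun hcon => hcon.2 hxΓ), add_zero]
          calc (F'.neighborSet (Sum.inr (i, x))).ncard
              ≤ _ := hcard
            _ ≤ (Δ - 1) + (b i.castSucc + b i.succ) := by
                rw [hc1]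
                omega
        · have e1 : ((if Sum.inl i.castSucc ∈ F'.verts ∧ x ∈ Γ
              then {(Sum.inl i.castSucc : Fin 6 ⊕ Fin 5 × V)} else ∅) : Finset _).card = 0 := by
            rw [if_neg (fun hcon => hxΓ hcon.2)]; simp
          have e2 : ((if Sum.inl i.succ ∈ F'.verts ∧ x ∈ Γ
              then {(Sum.inl i.succ : Fin 6 ⊕ Fin 5 × V)} else ∅) : Finset _).card = 0 := by
            rw [if_neg (fun hcon => hxΓ hcon.2)]; simp
          have e3 : (Finset.univ.filter (fun y : V => F.Adj x y)).card ≤ Δ := by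
            rw [hdegF]; exact hF x
          rw [if_neg (fun hcon => hxΓ hcon.2), if_pos ⟨hx, hxΓ⟩, zero_add]
          calc (F'.neighborSet (Sum.inr (i, x))).ncard ≤ _ := hcard
            _ ≤ Δ := by rw [hc1]; omega
      · rw [hnempty _ hx, if_neg (fun hcon => hx hcon.1), if_neg (fun hcon => hx hcon.1)]
    calc ∑ x : V, (F'.neighborSet (Sum.inr (i, x))).ncard
        ≤ ∑ x : V,
            ((if Sum.inr (i, x) ∈ F'.verts ∧ x ∈ Γ
                then (Δ - 1) + (b i.castSucc + b i.succ) else 0)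
            + (if Sum.inr (i, x) ∈ F'.verts ∧ x ∉ Γ then Δ else 0)) :=
          Finset.sum_le_sum fun x _ => hcap x
      _ = g i * ((Δ - 1) + (b i.castSucc + b i.succ)) + h i * Δ := by
          rw [Finset.sum_add_distrib]
          have e1 : ∑ x : V, (if Sum.inr (i, x) ∈ F'.verts ∧ x ∈ Γ
              then (Δ - 1) + (b i.castSucc + b i.succ) else 0)
              = g i * ((Δ - 1) + (b i.castSucc + b i.succ)) := by
            rw [Finset.sum_ite, Finset.sum_const, Finset.sum_const_zero, add_zero,
              smul_eq_mul]
            simp only [hg_def]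
          have e2 : ∑ x : V, (if Sum.inr (i, x) ∈ F'.verts ∧ x ∉ Γ then Δ else 0)
              = h i * Δ := by
            rw [Finset.sum_ite, Finset.sum_const, Finset.sum_const_zero, add_zero,
              smul_eq_mul]
            simp only [hh_def]
          rw [e1, e2]
  -- vertex count
  have Hv : F'.verts.ncard = ∑ j : Fin 6, b j + ∑ i : Fin 5, (g i + h i) := by
    have h0 : F'.verts.toFinset = Finset.univ.filter (fun w => w ∈ F'.verts) := by
      ext w; simp
    rw [Set.ncard_eq_toFinset_card', h0, Finset.card_filter, Fintype.sum_sum_type]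
    congr 1
    · refine Finset.sum_congr rfl fun j _ => ?_
      simp [hb_def]
    rw [Fintype.sum_prod_type]
    refine Finset.sum_congr rfl fun i _ => ?_
    have e1 : g i = ∑ x : V, (if Sum.inr (i, x) ∈ F'.verts ∧ x ∈ Γ then 1 else 0) := by
      simp only [hg_def]
      rw [Finset.card_filter]
    have e2 : h i = ∑ x : V, (if Sum.inr (i, x) ∈ F'.verts ∧ x ∉ Γ then 1 else 0) := by
      simp only [hh_def]
      rw [Finset.card_filter]
    rw [e1, e2, ← Finset.sum_add_distrib]
    refine Finset.sum_congr rfl fun x _ => ?_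
    by_cases h1 : Sum.inr (i, x) ∈ F'.verts <;> by_cases h2 : x ∈ Γ <;> simp [h1, h2]
  -- handshake, combined
  have Nmaster : 2 * F'.edgeSet.ncard ≤
      ∑ i : Fin 5, (b i.castSucc * g i + b i.succ * g i +
        (g i * ((Δ - 1) + (b i.castSucc + b i.succ)) + h i * Δ)) := by
    have h1 : 2 * F'.edgeSet.ncard =
        ∑ j : Fin 6, (F'.neighborSet (Sum.inl j)).ncard +
        ∑ i : Fin 5, ∑ x : V, (F'.neighborSet (Sum.inr (i, x))).ncard := by
      rw [← FGP.subgraph_handshake F', Fintype.sum_sum_type, Fintype.sum_prod_type]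
    rw [h1]
    calc _ ≤ ∑ i : Fin 5, (b i.castSucc * g i + b i.succ * g i) +
          ∑ i : Fin 5, (g i * ((Δ - 1) + (b i.castSucc + b i.succ)) + h i * Δ) :=
        Nat.add_le_add HOsum (Finset.sum_le_sum fun i _ => HI i)
      _ = _ := (Finset.sum_add_distrib).symm
  -- cast to ℝ
  have masterC : 2 * (F'.edgeSet.ncard : ℝ) ≤
      ∑ i : Fin 5, ((b i.castSucc : ℝ) * g i + (b i.succ : ℝ) * g i +
        ((g i : ℝ) * (((Δ:ℝ) - 1) + ((b i.castSucc : ℝ) + (b i.succ : ℝ))) + (h i : ℝ) * Δ)) := by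
    have h2 : ((2 * F'.edgeSet.ncard : ℕ) : ℝ) ≤
        ((∑ i : Fin 5, (b i.castSucc * g i + b i.succ * g i +
          (g i * ((Δ - 1) + (b i.castSucc + b i.succ)) + h i * Δ)) : ℕ) : ℝ) :=
      Nat.cast_le.mpr Nmaster
    rw [Nat.cast_sum] at h2
    push_cast [Nat.cast_sub hΔ1] at h2 ⊢
    convert h2 using 2 with i
  have hb01 : ∀ j, ((b j : ℝ) = 0 ∨ (b j : ℝ) = 1) := fun j => by
    rcases Nat.le_one_iff_eq_zero_or_eq_one.mp (hb1 j) with h' | h'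
    · left; exact_mod_cast h'
    · right; exact_mod_cast h'
  obtain ⟨P, hP_def⟩ : ∃ P : ℝ, P = ∑ i : Fin 5, ((b i.castSucc : ℝ) * (b i.succ : ℝ)) :=
    ⟨_, rfl⟩
  obtain ⟨B, hB_def⟩ : ∃ B : ℝ, B = ∑ j : Fin 6, ((b j : ℝ)) := ⟨_, rfl⟩
  obtain ⟨GH, hGH_def⟩ : ∃ GH : ℝ, GH = ∑ i : Fin 5, ((g i : ℝ) + (h i : ℝ)) := ⟨_, rfl⟩
  have masterR : 2 * (F'.edgeSet.ncard : ℝ) ≤ (2*(Δ:ℝ) - 1) * GH + (Δ:ℝ) * P := by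
    calc 2 * (F'.edgeSet.ncard : ℝ) ≤ _ := masterC
      _ ≤ ∑ i : Fin 5, ((2*(Δ:ℝ) - 1) * ((g i : ℝ) + (h i : ℝ)) +
            (Δ:ℝ) * ((b i.castSucc : ℝ) * (b i.succ : ℝ))) :=
          Finset.sum_le_sum fun i _ => FGP.copyB (Δ:ℝ) (g i) (h i) _ _ hΔR
            (Nat.cast_nonneg _) (Nat.cast_nonneg _) (by exact_mod_cast hgΔ i)
            (hb01 _) (hb01 _)
      _ = (2*(Δ:ℝ) - 1) * GH + (Δ:ℝ) * P := by
          rw [Finset.sum_add_distrib, hGH_def, hP_def, Finset.mul_sum, Finset.mul_sum]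
  have hvR : (F'.verts.ncard : ℝ) = B + GH := by
    rw [hB_def, hGH_def]
    rw [Hv]
    push_cast
    rfl
  have hP0 : 0 ≤ P := by
    rw [hP_def]
    exact Finset.sum_nonneg fun i _ => mul_nonneg (Nat.cast_nonneg _) (Nat.cast_nonneg _)
  have hGH0 : 0 ≤ GH := by
    rw [hGH_def]
    exact Finset.sum_nonneg fun i _ => by positivity
  -- expansions of P and B
  have c0 : Fin.castSucc (0 : Fin 5) = (0 : Fin 6) := by decide
  have c1 : Fin.castSucc (1 : Fin 5) = (1 : Fin 6) := by decide
  have c2 : Fin.castSucc (2 : Fin 5) = (2 : Fin 6) := by decide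
  have c3 : Fin.castSucc (3 : Fin 5) = (3 : Fin 6) := by decide
  have c4 : Fin.castSucc (4 : Fin 5) = (4 : Fin 6) := by decide
  have s0 : Fin.succ (0 : Fin 5) = (1 : Fin 6) := by decide
  have s1 : Fin.succ (1 : Fin 5) = (2 : Fin 6) := by decide
  have s2 : Fin.succ (2 : Fin 5) = (3 : Fin 6) := by decide
  have s3 : Fin.succ (3 : Fin 5) = (4 : Fin 6) := by decide
  have s4 : Fin.succ (4 : Fin 5) = (5 : Fin 6) := by decide
  have hPexp : P = (b 0 : ℝ) * (b 1 : ℝ) + (b 1 : ℝ) * (b 2 : ℝ) + (b 2 : ℝ) * (b 3 : ℝ)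
      + (b 3 : ℝ) * (b 4 : ℝ) + (b 4 : ℝ) * (b 5 : ℝ) := by
    rw [hP_def, Fin.sum_univ_five]
    rw [c0, c1, c2, c3, c4, s0, s1, s2, s3, s4]
  have hBexp : B = (b 0 : ℝ) + (b 1 : ℝ) + (b 2 : ℝ) + (b 3 : ℝ) + (b 4 : ℝ) + (b 5 : ℝ) := by
    rw [hB_def, Fin.sum_univ_six]
  have hne05 : (Sum.inl (0 : Fin 6) : Fin 6 ⊕ Fin 5 × V) ≠ Sum.inl (5 : Fin 6) := by
    intro hcon
    exact absurd (Sum.inl.inj hcon) (by decide)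
  rcases hX with hX | hX
  · -- X ⊆ verts : t = 2
    have h0m : Sum.inl (0 : Fin 6) ∈ F'.verts := hX (by simp)
    have h5m : Sum.inl (5 : Fin 6) ∈ F'.verts := hX (by simp)
    have hstruct : 3 * P + 10 ≤ 5 * B := by
      have := FGP.struct2 (b 0) (b 1) (b 2) (b 3) (b 4) (b 5) (hbmem 0 h0m) (hbmem 5 h5m)
        (hb1 1) (hb1 2) (hb1 3) (hb1 4)
      rw [hPexp, hBexp]
      exact_mod_cast this
    have hB2 : (2:ℝ) ≤ B := by linarith
    have hkey : 2 * (F'.edgeSet.ncard : ℝ) ≤ (2*(Δ:ℝ) - 1) * ((F'.verts.ncard : ℝ) - 2) := by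
      rw [hvR]
      have p1 : (0:ℝ) ≤ ((Δ:ℝ) - 3) * (B - 2) :=
        mul_nonneg (by linarith) (by linarith)
      have p2 : (0:ℝ) ≤ (Δ:ℝ) * (5*B - 10 - 3*P) :=
        mul_nonneg (by linarith) (by linarith)
      have hexpand : (2*(Δ:ℝ) - 1) * (B + GH - 2)
          = (2*(Δ:ℝ) - 1) * GH + (2*(Δ:ℝ) - 1) * (B - 2) := by ring
      linarith [masterR, p1, p2]
    have hm : (({Sum.inl 0, Sum.inl 5} : Set (Fin 6 ⊕ Fin 5 × V)) ∩ F'.verts).ncard = 2 := by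
      rw [Set.inter_eq_left.mpr hX]
      exact Set.ncard_pair hne05
    rw [hm]
    have hmax : max (1:ℝ) ((2:ℕ):ℝ) = 2 := by norm_num
    rw [hmax]
    by_cases hpos : (0:ℝ) < (F'.verts.ncard : ℝ) - 2
    · rw [div_le_iff₀ hpos]
      linarith [hkey]
    · have hd : (F'.verts.ncard : ℝ) - 2 ≤ 0 := by linarith [not_lt.mp hpos]
      have := div_nonpos_of_nonneg_of_nonpos (Nat.cast_nonneg F'.edgeSet.ncard) hd
      linarith
  · -- X ∩ verts = ∅ : t = 1
    have h0m : Sum.inl (0 : Fin 6) ∉ F'.verts := fun hmem =>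
      (Set.eq_empty_iff_forall_notMem.mp hX (Sum.inl 0)) ⟨by simp, hmem⟩
    have h5m : Sum.inl (5 : Fin 6) ∉ F'.verts := fun hmem =>
      (Set.eq_empty_iff_forall_notMem.mp hX (Sum.inl 5)) ⟨by simp, hmem⟩
    have hb0 : b 0 = 0 := hbnot _ h0m
    have hb5 : b 5 = 0 := hbnot _ h5m
    have hkey : 2 * (F'.edgeSet.ncard : ℝ) ≤ (2*(Δ:ℝ) - 1) * ((F'.verts.ncard : ℝ) - 1) := by
      by_cases hz : b 1 = 0 ∧ b 2 = 0 ∧ b 3 = 0 ∧ b 4 = 0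
      · -- all outside vertices absent
        have hball : ∀ j : Fin 6, b j = 0 := by
          intro j
          fin_cases j
          · exact hb0
          · exact hz.1
          · exact hz.2.1
          · exact hz.2.2.1
          · exact hz.2.2.2
          · exact hb5
        have hbzR : ∀ j : Fin 6, (b j : ℝ) = 0 := fun j => by rw [hball j]; norm_num
        have hB0 : B = 0 := by
          rw [hBexp, hbzR, hbzR, hbzR, hbzR, hbzR, hbzR]; ring
        have master0 : 2 * (F'.edgeSet.ncard : ℝ) ≤ (Δ:ℝ) * GH := by
          calc 2 * (F'.edgeSet.ncard : ℝ) ≤ _ := masterC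
            _ ≤ ∑ i : Fin 5, (Δ:ℝ) * ((g i : ℝ) + (h i : ℝ)) := by
                refine Finset.sum_le_sum fun i _ => ?_
                rw [hbzR, hbzR]
                have hg0 : (0:ℝ) ≤ (g i : ℝ) := Nat.cast_nonneg _
                have hh0 : (0:ℝ) ≤ (h i : ℝ) := Nat.cast_nonneg _
                nlinarith
            _ = (Δ:ℝ) * GH := by rw [hGH_def, Finset.mul_sum]
        by_cases hv3 : 3 ≤ F'.verts.ncard
        · have hv3R : (3:ℝ) ≤ (F'.verts.ncard : ℝ) := by exact_mod_cast hv3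
          have hGHv : GH = (F'.verts.ncard : ℝ) := by rw [hvR, hB0]; ring
          rw [← hGHv] at hv3R ⊢
          have p1 : (0:ℝ) ≤ ((Δ:ℝ) - 1) * (GH - 3) :=
            mul_nonneg (by linarith) (by linarith)
          linarith [master0, p1, hΔR]
        · have hv2 : F'.verts.ncard = 2 := by
            have hge := FGP.two_le_verts F' hE (Set.toFinite _)
            omega
          have he1 : F'.edgeSet.ncard ≤ 1 := FGP.small_verts F' hv2
          have he1R : (F'.edgeSet.ncard : ℝ) ≤ 1 := by exact_mod_cast he1
          rw [hv2]
          push_cast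
          linarith [he1R, hΔR]
      · -- some interior outside vertex present
        have hnz : 1 ≤ b 1 + b 2 + b 3 + b 4 := by
          by_contra hcon
          push_neg at hcon
          exact hz ⟨by omega, by omega, by omega, by omega⟩
        have hstruct : 3 * P + 5 ≤ 5 * B := by
          have := FGP.struct1 (b 0) (b 1) (b 2) (b 3) (b 4) (b 5) hb0 hb5
            (hb1 1) (hb1 2) (hb1 3) (hb1 4) hnz
          rw [hPexp, hBexp]
          exact_mod_cast this
        have hB1 : (1:ℝ) ≤ B := by linarith
        rw [hvR]
        have p1 : (0:ℝ) ≤ ((Δ:ℝ) - 3) * (B - 1) :=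
          mul_nonneg (by linarith) (by linarith)
        have p2 : (0:ℝ) ≤ (Δ:ℝ) * (5*B - 5 - 3*P) :=
          mul_nonneg (by linarith) (by linarith)
        linarith [masterR, p1, p2]
    have hm : (({Sum.inl 0, Sum.inl 5} : Set (Fin 6 ⊕ Fin 5 × V)) ∩ F'.verts).ncard = 0 := by
      rw [hX, Set.ncard_empty]
    rw [hm]
    have hmax : max (1:ℝ) ((0:ℕ):ℝ) = 1 := by norm_num
    rw [hmax]
    by_cases hpos : (0:ℝ) < (F'.verts.ncard : ℝ) - 1
    · rw [div_le_iff₀ hpos]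
      linarith [hkey]
    · have hd : (F'.verts.ncard : ℝ) - 1 ≤ 0 := by linarith [not_lt.mp hpos]
      have := div_nonpos_of_nonneg_of_nonpos (Nat.cast_nonneg F'.edgeSet.ncard) hd
      linarith
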